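/- arXiv:1603.08853 — 5 statements merged into one kernel-verified Lean document; each statement's English description precedes it below -/
import Mathlib

section
/- Under the assumptions α1a > α2 ≥ α1n > 0, b2 ≥ b1 ≥ 0, D > (b2 - b1)/α1n, and p ∈ (0,1), with K0 = α2·D - b1 + b2, ᾱ1 = (1-p)·α1n + p·α1a, K1 = K0/(ᾱ1+α2), K2 = K0/(α1a+α2), K3 = K0/(α1n+α2), define the thresholds μ1 = K1·(α1a - ᾱ1) / (D·(1-p)·(α1a + α2)), μ2 = (K1 - p·K2)/(D·(1-p)), and μ3 = K3/D. Then 0 < μ1 < μ2 < μ3 ≤ 1. -/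
set_option maxHeartbeats 1000000


theorem stmt_1 (α1n α1a α2 b1 b2 D p : ℝ)
    (h1 : α1a > α2) (h2 : α2 ≥ α1n) (h3 : α1n > 0)
    (h4 : b2 ≥ b1) (h5 : b1 ≥ 0) (h6 : D > (b2 - b1) / α1n)
    (hp : p ∈ Set.Ioo (0:ℝ) 1)
    (ᾱ1 K0 K1 K2 K3 μ1 μ2 μ3 : ℝ)
    (hK0 : K0 = α2 * D - b1 + b2)
    (hᾱ1 : ᾱ1 = (1 - p) * α1n + p * α1a)
    (hK1 : K1 = K0 / (ᾱ1 + α2))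
    (hK2 : K2 = K0 / (α1a + α2))
    (hK3 : K3 = K0 / (α1n + α2))
    (hμ1 : μ1 = K1 * (α1a - ᾱ1) / (D * (1 - p) * (α1a + α2)))
    (hμ2 : μ2 = (K1 - p * K2) / (D * (1 - p)))
    (hμ3 : μ3 = K3 / D) :
    0 < μ1 ∧ μ1 < μ2 ∧ μ2 < μ3 ∧ μ3 ≤ 1 := by
  obtain ⟨hp0, hp1⟩ := hp
  have hα2 : α2 > 0 := lt_of_lt_of_le h3 h2
  have hA : α1a > 0 := lt_trans hα2 h1
  have hD : D > 0 := lt_of_le_of_lt (div_nonneg (by linarith) h3.le) h6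
  have hb : b2 - b1 < D * α1n := (div_lt_iff₀ h3).mp h6
  have hK0pos : K0 > 0 := by rw [hK0]; nlinarith
  have hᾱpos : ᾱ1 > 0 := by rw [hᾱ1]; nlinarith
  have hᾱlt : ᾱ1 < α1a := by rw [hᾱ1]; nlinarith
  have d1 : ᾱ1 + α2 > 0 := by linarith
  have d2 : α1a + α2 > 0 := by linarith
  have d3 : α1n + α2 > 0 := by linarith
  have h1p : (1 : ℝ) - p > 0 := by linarith
  have hden : (ᾱ1 + α2) * (α1a + α2) * (D * (1 - p)) > 0 := by positivity
  have e1 : μ1 = K0 * (α1a - ᾱ1) / ((ᾱ1 + α2) * (α1a + α2) * (D * (1 - p))) := by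
    rw [hμ1, hK1, eq_div_iff hden.ne']
    field_simp
  have e2 : μ2 = K0 * ((α1a + α2) - p * (ᾱ1 + α2)) / ((ᾱ1 + α2) * (α1a + α2) * (D * (1 - p))) := by
    rw [hμ2, hK1, hK2]
    field_simp
  have e3 : μ3 = K0 / ((α1n + α2) * D) := by
    rw [hμ3, hK3, div_div]
  refine ⟨?_, ?_, ?_, ?_⟩
  · rw [e1]
    apply div_pos (mul_pos hK0pos (by linarith)) hden
  · rw [e1, e2, div_lt_div_iff₀ hden hden]
    nlinarith [mul_pos hK0pos (mul_pos h1p d1), mul_pos hden (mul_pos hK0pos (mul_pos h1p d1))]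
  · rw [e2, e3, div_lt_div_iff₀ hden (by positivity)]
    have key : (0:ℝ) < p * (α1a - α1n) ^ 2 :=
      mul_pos hp0 (pow_pos (by linarith) 2)
    have pos : (0:ℝ) < K0 * D * (1 - p) * (p * (α1a - α1n) ^ 2) :=
      mul_pos (mul_pos (mul_pos hK0pos hD) h1p) key
    have hid : K0 * ((ᾱ1 + α2) * (α1a + α2) * (D * (1 - p)))
        - K0 * (α1a + α2 - p * (ᾱ1 + α2)) * ((α1n + α2) * D)
        = K0 * D * (1 - p) * (p * (α1a - α1n) ^ 2) := by
      subst hᾱ1; ring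
    linarith [hid, pos]
  · rw [e3, div_le_one (mul_pos d3 hD), hK0]
    nlinarith [hb]
end

section
/- Under the assumptions α1a > α2 ≥ α1n > 0, b2 ≥ b1 ≥ 0, D > (b2-b1)/α1n, p ∈ (0,1), η^H = 1, and 0 ≤ μ < μ1 (with μ1 = K1·(α1a - ᾱ1)/(D·(1-p)·(α1a+α2)), K1 = (α2·D-b1+b2)/(ᾱ1+α2), ᾱ1 = (1-p)α1n + p·α1a), the uninformed population's equilibrium split fraction ρ^L = K1/((1-μ)·D) - (1-p)·μ/(1-μ) satisfies 0 < ρ^L < 1. -/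
set_option maxHeartbeats 1000000 in
theorem stmt_7 (α1n α1a α2 b1 b2 D p μ : ℝ)
    (h1 : α1a > α2) (h2 : α2 ≥ α1n) (h3 : α1n > 0)
    (h4 : b2 ≥ b1) (h5 : b1 ≥ 0) (h6 : D > (b2 - b1) / α1n)
    (hp : p ∈ Set.Ioo (0:ℝ) 1)
    (ᾱ1 K1 μ1 ρL : ℝ)
    (hᾱ1 : ᾱ1 = (1 - p) * α1n + p * α1a)
    (hK1 : K1 = (α2 * D - b1 + b2) / (ᾱ1 + α2))
    (hμ1 : μ1 = K1 * (α1a - ᾱ1) / (D * (1 - p) * (α1a + α2)))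
    (hμ : 0 ≤ μ) (hμ' : μ < μ1)
    (hρL : ρL = K1 / ((1 - μ) * D) - (1 - p) * μ / (1 - μ)) :
    0 < ρL ∧ ρL < 1 := by
  obtain ⟨hp0, hp1⟩ := hp
  have hα2 : 0 < α2 := lt_of_lt_of_le h3 h2
  have hα1a : 0 < α1a := lt_trans hα2 h1
  have hbb : b2 - b1 < D * α1n := (div_lt_iff₀ h3).mp h6
  have hD : 0 < D := by nlinarith
  have hᾱgt : α1n < ᾱ1 := by nlinarith
  have hᾱlt : ᾱ1 < α1a := by nlinarith
  have hden : 0 < ᾱ1 + α2 := by nlinarith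
  have hN : 0 < α2 * D - b1 + b2 := by nlinarith
  have hK1pos : 0 < K1 := by rw [hK1]; exact div_pos hN hden
  have hK1eq : K1 * (ᾱ1 + α2) = α2 * D - b1 + b2 := by
    rw [hK1]; field_simp
  have hK1D : K1 < D := by nlinarith
  have hα1a2 : 0 < α1a + α2 := by linarith
  have hdp : 0 < D * (1 - p) * (α1a + α2) := mul_pos (mul_pos hD (by linarith)) hα1a2
  have hμD : μ * (D * (1 - p) * (α1a + α2)) < K1 * (α1a - ᾱ1) := by
    rw [hμ1] at hμ'
    exact (lt_div_iff₀ hdp).mp hμ'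
  -- step1 : μ*D*(α1a+α2) < K1*(α1a-α1n)
  have step1 : μ * D * (α1a + α2) < K1 * (α1a - α1n) := by
    have h1p : 0 < 1 - p := by linarith
    have : (1 - p) * (μ * D * (α1a + α2)) < (1 - p) * (K1 * (α1a - α1n)) := by
      nlinarith [hμD]
    exact lt_of_mul_lt_mul_left this (le_of_lt h1p)
  have hμ1lt : μ < 1 := by
    nlinarith [step1, mul_pos hD hα1a2, mul_pos hK1pos hα1a2]
  have h1μ : 0 < 1 - μ := by linarith
  have hDen2 : 0 < (1 - μ) * D := mul_pos h1μ hD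
  have hρ : ρL = (K1 - (1 - p) * μ * D) / ((1 - μ) * D) := by
    have e1 : (1 - p) * μ / (1 - μ) = ((1 - p) * μ * D) / ((1 - μ) * D) :=
      (mul_div_mul_right _ _ hD.ne').symm
    rw [hρL, e1, div_sub_div_same]
  have hq : 0 < p * (α1a - α1n) := mul_pos hp0 (by linarith)
  constructor
  · rw [hρ]
    apply div_pos _ hDen2
    have h7 : ((1 - p) * μ * D) * (α1a + α2) < K1 * (α1a + α2) := by
      linarith [hμD, mul_pos hK1pos hden]
    have := lt_of_mul_lt_mul_right h7 hα1a2.le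
    linarith
  · rw [hρ, div_lt_one hDen2]
    have key : p * μ * D * (α1a + α2) * (ᾱ1 + α2) <
        p * (α1a - α1n) * (α2 * D - b1 + b2) := by
      have h8 := mul_lt_mul_of_pos_left step1 hp0
      calc p * μ * D * (α1a + α2) * (ᾱ1 + α2)
          = (p * (μ * D * (α1a + α2))) * (ᾱ1 + α2) := by ring
        _ < (p * (K1 * (α1a - α1n))) * (ᾱ1 + α2) :=
            mul_lt_mul_of_pos_right h8 hden
        _ = p * (α1a - α1n) * (K1 * (ᾱ1 + α2)) := by ring
        _ = p * (α1a - α1n) * (α2 * D - b1 + b2) := by rw [hK1eq]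
    have hNlt : α2 * D - b1 + b2 < D * (ᾱ1 + α2) - p * (α1a - α1n) * D := by
      nlinarith [hbb]
    have hND : α2 * D - b1 + b2 < D * (α1a + α2) := by
      nlinarith [mul_pos hD (show (0:ℝ) < α1a - ᾱ1 by linarith)]
    have hst : (α2 * D - b1 + b2) * (α1a + α2) + p * (α1a - α1n) * (α2 * D - b1 + b2)
        < D * ((ᾱ1 + α2) * (α1a + α2)) := by
      nlinarith [mul_lt_mul_of_pos_right hNlt hα1a2, mul_lt_mul_of_pos_left hND hq]
    have e2 : K1 * ((ᾱ1 + α2) * (α1a + α2)) = (α2 * D - b1 + b2) * (α1a + α2) := by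
      rw [← hK1eq]; ring
    have hsum : (K1 + p * μ * D) * ((ᾱ1 + α2) * (α1a + α2))
        < D * ((ᾱ1 + α2) * (α1a + α2)) := by linarith [key, hst, e2]
    have hfin : K1 + p * μ * D < D :=
      lt_of_mul_lt_mul_right hsum (mul_pos hden hα1a2).le
    linarith [hfin]
end

section
/- Under assumptions α1a > α2 ≥ α1n > 0, b2 ≥ b1 ≥ 0, D > (b2-b1)/α1n, p ∈ (0,1), η^H = 1, and μ3 ≤ μ ≤ 1 with μ3 = K3/D, the loads q1^{Hn} = K3 and q1^{Ha} = K2 satisfy 0 ≤ q1^{Hn} ≤ μ·D, 0 ≤ q1^{Ha} ≤ μ·D, and (1-p)·q1^{Hn} + p·q1^{Ha} > K1, where K1 = K0/(ᾱ1+α2), K2 = K0/(α1a+α2), K3 = K0/(α1n+α2), K0 = α2·D - b1 + b2, ᾱ1 = (1-p)·α1n + p·α1a. -/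
theorem stmt_9 (α1n α1a α2 b1 b2 D p μ : ℝ)
    (h1 : α1a > α2) (h2 : α2 ≥ α1n) (h3 : α1n > 0)
    (h4 : b2 ≥ b1) (h5 : b1 ≥ 0) (h6 : D > (b2 - b1) / α1n)
    (hp : p ∈ Set.Ioo (0:ℝ) 1)
    (ᾱ1 K0 K1 K2 K3 μ3 q1Hn q1Ha : ℝ)
    (hK0 : K0 = α2 * D - b1 + b2)
    (hᾱ1 : ᾱ1 = (1 - p) * α1n + p * α1a)
    (hK1 : K1 = K0 / (ᾱ1 + α2))
    (hK2 : K2 = K0 / (α1a + α2))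
    (hK3 : K3 = K0 / (α1n + α2))
    (hμ3 : μ3 = K3 / D)
    (hμl : μ3 ≤ μ) (hμu : μ ≤ 1)
    (hq1Hn : q1Hn = K3) (hq1Ha : q1Ha = K2) :
    (0 ≤ q1Hn ∧ q1Hn ≤ μ * D) ∧ (0 ≤ q1Ha ∧ q1Ha ≤ μ * D) ∧
      (1 - p) * q1Hn + p * q1Ha > K1 := by
  obtain ⟨hp0, hp1⟩ := hp
  have hα2 : α2 > 0 := lt_of_lt_of_le h3 h2
  have hD : D > 0 := lt_of_le_of_lt (div_nonneg (by linarith) h3.le) h6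
  have hK0pos : K0 > 0 := by
    rw [hK0]; nlinarith
  have ha : α1n + α2 > 0 := by linarith
  have hb : α1a + α2 > 0 := by linarith
  have hc : ᾱ1 + α2 > 0 := by rw [hᾱ1]; nlinarith
  have hK3pos : K3 > 0 := by rw [hK3]; positivity
  have hK2pos : K2 > 0 := by rw [hK2]; positivity
  have hK32 : K2 ≤ K3 := by
    rw [hK2, hK3]
    apply div_le_div_of_nonneg_left hK0pos.le ha (by linarith)
  have hK3μD : K3 ≤ μ * D := by
    have := (div_le_iff₀ hD).mp (hμ3 ▸ hμl)
    linarith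
  refine ⟨⟨by linarith [hq1Hn ▸ hK3pos], by rw [hq1Hn]; exact hK3μD⟩,
    ⟨by linarith [hq1Ha ▸ hK2pos], by rw [hq1Ha]; linarith⟩, ?_⟩
  have hne : α1a - α1n > 0 := by linarith
  have hx : K3 * (α1n + α2) = K0 := by rw [hK3]; field_simp
  have hy : K2 * (α1a + α2) = K0 := by rw [hK2]; field_simp
  have hxy : K2 < K3 := by
    rw [hK2, hK3]; exact div_lt_div_of_pos_left hK0pos ha (by linarith)
  rw [hq1Hn, hq1Ha, hK1, gt_iff_lt, div_lt_iff₀ hc, hᾱ1]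
  nlinarith [mul_pos (mul_pos hp0 (sub_pos.mpr hp1)) (mul_pos (sub_pos.mpr hxy) hne), hx, hy]
end

section
/- Under assumptions α1a > α2 ≥ α1n > 0, b2 ≥ b1 ≥ 0, D > (b2-b1)/α1n, p ∈ (0,1), η^H = 1, and μ3 ≤ μ ≤ 1 with μ3 = K3/D, in the regime-R4 equilibrium the realized cost of every player is the same in each state: in the normal state α1n·K3 + b1 = α2·(D - K3) + b2, and in the incident state α1a·K2 + b1 = α2·(D - K2) + b2; consequently, the relative individual value of information is zero. -/
theorem stmt_13 (α1n α1a α2 b1 b2 D p μ : ℝ)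
    (h1 : α1a > α2) (h2 : α2 ≥ α1n) (h3 : α1n > 0)
    (h4 : b2 ≥ b1) (h5 : b1 ≥ 0) (h6 : D > (b2 - b1) / α1n)
    (hp : p ∈ Set.Ioo (0:ℝ) 1)
    (K2 K3 μ3 : ℝ)
    (hK2 : K2 = (α2 * D - b1 + b2) / (α1a + α2))
    (hK3 : K3 = (α2 * D - b1 + b2) / (α1n + α2))
    (hμ3 : μ3 = K3 / D)
    (hμl : μ3 ≤ μ) (hμu : μ ≤ 1) :
    α1n * K3 + b1 = α2 * (D - K3) + b2 ∧
      α1a * K2 + b1 = α2 * (D - K2) + b2 := by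
  have h2' : α2 > 0 := lt_of_lt_of_le h3 h2
  have d1 : α1n + α2 ≠ 0 := by positivity
  have d2 : α1a + α2 ≠ 0 := by nlinarith
  subst hK2 hK3
  constructor <;> field_simp <;> ring
end

section
/- Under assumptions α1a > α2 ≥ α1n > 0, b2 ≥ b1 ≥ 0, D > (b2-b1)/α1n, and p ∈ (0,1), define the regime-R1 expected social cost as the quadratic C̄(μ) = A·μ² + B·μ + C with A = D·p·(1-p)·(α1a + α1n + α2 - ᾱ1) and B = K1·((1-p)·α1n + (2p-1)·ᾱ1 - p·α1a), where ᾱ1 = (1-p)·α1n + p·α1a and K1 = (α2·D - b1 + b2)/(ᾱ1+α2). Then A > 0 and the vertex μ̂ = -B/(2A) satisfies μ̂ ≥ μ1, where μ1 = K1·(α1a - ᾱ1)/(D·(1-p)·(α1a+α2)); hence C̄ is nonincreasing on [0, μ1]. -/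
theorem stmt_14 (α1n α1a α2 b1 b2 D p : ℝ)
    (h1 : α1a > α2) (h2 : α2 ≥ α1n) (h3 : α1n > 0)
    (h4 : b2 ≥ b1) (h5 : b1 ≥ 0) (h6 : D > (b2 - b1) / α1n)
    (hp : p ∈ Set.Ioo (0:ℝ) 1)
    (ᾱ1 K1 A B μ1 C : ℝ)
    (hᾱ1 : ᾱ1 = (1 - p) * α1n + p * α1a)
    (hK1 : K1 = (α2 * D - b1 + b2) / (ᾱ1 + α2))
    (hA : A = D * p * (1 - p) * (α1a + α1n + α2 - ᾱ1))
    (hB : B = K1 * ((1 - p) * α1n + (2 * p - 1) * ᾱ1 - p * α1a))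
    (hμ1 : μ1 = K1 * (α1a - ᾱ1) / (D * (1 - p) * (α1a + α2)))
    (Cbar : ℝ → ℝ)
    (hCbar : ∀ μ, Cbar μ = A * μ ^ 2 + B * μ + C) :
    0 < A ∧ μ1 ≤ -B / (2 * A) ∧
      ∀ x y, 0 ≤ x → x ≤ y → y ≤ μ1 → Cbar y ≤ Cbar x := by
  obtain ⟨hp0, hp1⟩ := hp
  have hD : 0 < D := by
    have : (0:ℝ) ≤ (b2 - b1) / α1n := div_nonneg (by linarith) h3.le
    linarith
  have hα2 : 0 < α2 := lt_of_lt_of_le h3 h2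
  have hα1a : 0 < α1a := lt_trans hα2 h1
  have hᾱpos : 0 < ᾱ1 := by
    rw [hᾱ1]; nlinarith
  have hK1pos : 0 < K1 := by
    rw [hK1]
    apply div_pos
    · nlinarith
    · linarith
  have hApos : 0 < A := by
    rw [hA, hᾱ1]
    have h' : 0 < α1a + α1n + α2 - ((1 - p) * α1n + p * α1a) := by nlinarith
    have := mul_pos (mul_pos (mul_pos hD hp0) (by linarith : (0:ℝ) < 1 - p)) h'
    linarith [this]
  have hBval : B = -(2 * p * (1 - p) * (α1a - α1n) * K1) := by
    rw [hB, hᾱ1]; ring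
  have hvertex : μ1 ≤ -B / (2 * A) := by
    rw [le_div_iff₀ (by linarith : (0:ℝ) < 2 * A)]
    rw [hμ1, hBval, hA, hᾱ1]
    have hd1 : D * (1 - p) * (α1a + α2) > 0 := by
      apply mul_pos (mul_pos hD (by linarith)) (by linarith)
    rw [div_mul_eq_mul_div, div_le_iff₀ hd1]
    have key : 0 ≤ 2 * D * p ^ 2 * (1 - p) ^ 2 * K1 * (α1a - α1n) ^ 2 := by
      have : (0:ℝ) < 1 - p := by linarith
      positivity
    nlinarith [key]
  refine ⟨hApos, hvertex, ?_⟩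
  intro x y hx hxy hyμ
  have h2A : 2 * A * μ1 ≤ -B := by
    have := (le_div_iff₀ (by linarith : (0:ℝ) < 2 * A)).mp hvertex
    linarith
  rw [hCbar, hCbar]
  nlinarith [mul_nonneg (sub_nonneg.2 hxy) hApos.le,
    mul_le_mul_of_nonneg_left (show x + y ≤ 2 * μ1 by linarith) hApos.le,
    mul_nonneg (sub_nonneg.2 hxy) (show 0 ≤ -B - A * (x + y) by nlinarith)]
end
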